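/- Let $U$ and $V$ be random variables such that $\sup_{t}|P(U \leq t) - \Phi(t)| \leq a$ and $\mathbb{E}|U - V|^q \leq b^q$ for some $q > 0$ and constants $a, b > 0$. Then $\sup_t |P(V \leq t) - \Phi(t)| \leq a + b^{q/(q+1)}(1 + (2\pi)^{-1/2})$, where $\Phi$ is the standard normal CDF. -/

import Mathlib

open MeasureTheory ProbabilityTheory
open scoped NNReal ENNReal

/-- The standard normal cumulative distribution function. -/
noncomputable def stdNormalCDF (x : ℝ) : ℝ :=
  ((ProbabilityTheory.gaussianReal 0 1) (Set.Iic x)).toReal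

lemma gaussianPDF_le_aux (x : ℝ) :
    ProbabilityTheory.gaussianPDF 0 1 x ≤ ENNReal.ofReal ((2 * Real.pi) ^ (-(1:ℝ)/2)) := by
  rw [gaussianPDF]
  apply ENNReal.ofReal_le_ofReal
  rw [gaussianPDFReal]
  have hπ : (0:ℝ) < 2 * Real.pi := by positivity
  have hc : (2 * Real.pi) ^ (-(1:ℝ)/2) = (Real.sqrt (2 * Real.pi))⁻¹ := by
    rw [Real.sqrt_eq_rpow, ← Real.rpow_neg hπ.le, neg_div]
  rw [hc]
  push_cast
  simp only [mul_one]
  exact mul_le_of_le_one_right (by positivity)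
    (Real.exp_le_one_iff.2 (by nlinarith [sq_nonneg (x - 0)]))

lemma stdNormalCDF_sub_le {s t : ℝ} (h : s ≤ t) :
    stdNormalCDF t - stdNormalCDF s ≤ (t - s) * (2 * Real.pi) ^ (-(1:ℝ)/2) := by
  have h1 : (1 : ℝ≥0) ≠ 0 := one_ne_zero
  have hsplit : (gaussianReal 0 1) (Set.Iic t)
      = (gaussianReal 0 1) (Set.Iic s) + (gaussianReal 0 1) (Set.Ioc s t) := by
    rw [← measure_union (Set.Iic_disjoint_Ioc le_rfl) measurableSet_Ioc,
      Set.Iic_union_Ioc_eq_Iic h]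
  have hfin : ∀ u : Set ℝ, (gaussianReal 0 1) u ≠ ⊤ := fun u => measure_ne_top _ _
  have heq : stdNormalCDF t - stdNormalCDF s = ((gaussianReal 0 1) (Set.Ioc s t)).toReal := by
    rw [stdNormalCDF, stdNormalCDF, hsplit, ENNReal.toReal_add (hfin _) (hfin _)]
    ring
  rw [heq]
  have hb : (gaussianReal 0 1) (Set.Ioc s t)
      ≤ ENNReal.ofReal ((2 * Real.pi) ^ (-(1:ℝ)/2)) * ENNReal.ofReal (t - s) := by
    rw [gaussianReal_apply 0 h1]
    calc ∫⁻ x in Set.Ioc s t, gaussianPDF 0 1 x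
        ≤ ∫⁻ _ in Set.Ioc s t, ENNReal.ofReal ((2 * Real.pi) ^ (-(1:ℝ)/2)) :=
          lintegral_mono fun x => gaussianPDF_le_aux x
      _ = ENNReal.ofReal ((2 * Real.pi) ^ (-(1:ℝ)/2)) * volume (Set.Ioc s t) := by
          rw [setLIntegral_const]
      _ = _ := by rw [Real.volume_Ioc]
  calc ((gaussianReal 0 1) (Set.Ioc s t)).toReal
      ≤ (ENNReal.ofReal ((2 * Real.pi) ^ (-(1:ℝ)/2)) * ENNReal.ofReal (t - s)).toReal :=
        ENNReal.toReal_mono (by finiteness) hb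
    _ = (2 * Real.pi) ^ (-(1:ℝ)/2) * (t - s) := by
        rw [ENNReal.toReal_mul, ENNReal.toReal_ofReal (by positivity),
          ENNReal.toReal_ofReal (by linarith)]
    _ = (t - s) * (2 * Real.pi) ^ (-(1:ℝ)/2) := mul_comm _ _

/-- Kolmogorov–Smirnov perturbation bound: if `U` is within `a` of standard normal in Kolmogorov
distance and `𝔼|U - V|^q ≤ b^q`, then `V` is within `a + b^{q/(q+1)} (1 + (2π)^{-1/2})` of
standard normal. -/
theorem ks_perturbation_bound {Ω : Type*} [MeasurableSpace Ω] (P : Measure Ω)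
    [IsProbabilityMeasure P]
    (U V : Ω → ℝ) (hU : Measurable U) (hV : Measurable V)
    (q a b : ℝ) (hq : 0 < q) (ha : 0 < a) (hb : 0 < b)
    (hKS : ∀ t : ℝ, |(P {ω | U ω ≤ t}).toReal - stdNormalCDF t| ≤ a)
    (hint : Integrable (fun ω => |U ω - V ω| ^ q) P)
    (hmom : ∫ ω, |U ω - V ω| ^ q ∂P ≤ b ^ q) :
    ∀ t : ℝ, |(P {ω | V ω ≤ t}).toReal - stdNormalCDF t| ≤
      a + b ^ (q / (q + 1)) * (1 + (2 * Real.pi) ^ (-(1 : ℝ) / 2)) := by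
  intro t
  set ε : ℝ := b ^ (q / (q + 1)) with hεdef
  set c : ℝ := (2 * Real.pi) ^ (-(1 : ℝ) / 2) with hcdef
  have hε : 0 < ε := Real.rpow_pos_of_pos hb _
  have hc0 : 0 ≤ c := Real.rpow_nonneg (by positivity) _
  have hεq : 0 < ε ^ q := Real.rpow_pos_of_pos hε q
  -- key rpow identity : ε ^ q * ε = b ^ q
  have hpow : ε ^ q * ε = b ^ q := by
    rw [hεdef, ← Real.rpow_mul hb.le, ← Real.rpow_add hb]
    congr 1
    have : q + 1 ≠ 0 := by linarith
    field_simp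
  -- Markov's inequality
  have hMarkov : (P {ω | ε < |U ω - V ω|}).toReal ≤ ε := by
    have h1 := mul_meas_ge_le_integral_of_nonneg (μ := P)
      (ae_of_all _ fun ω => Real.rpow_nonneg (abs_nonneg _) q) hint (ε ^ q)
    have hsub : {ω | ε < |U ω - V ω|} ⊆ {ω | ε ^ q ≤ |U ω - V ω| ^ q} := fun ω hω =>
      Real.rpow_le_rpow hε.le (le_of_lt hω) hq.le
    have h2 : (P {ω | ε < |U ω - V ω|}).toReal
        ≤ (P {ω | ε ^ q ≤ (fun ω => |U ω - V ω| ^ q) ω}).toReal :=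
      ENNReal.toReal_mono (measure_ne_top _ _) (measure_mono hsub)
    have key : ε ^ q * (P {ω | ε < |U ω - V ω|}).toReal ≤ ε ^ q * ε := by
      rw [hpow]
      exact le_trans (mul_le_mul_of_nonneg_left h2 hεq.le) (le_trans h1 hmom)
    exact le_of_mul_le_mul_left key hεq
  -- CDF Lipschitz bounds
  have hΦ1 : stdNormalCDF (t + ε) - stdNormalCDF t ≤ ε * c := by
    have := stdNormalCDF_sub_le (s := t) (t := t + ε) (by linarith)
    simpa using this
  have hΦ2 : stdNormalCDF t - stdNormalCDF (t - ε) ≤ ε * c := by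
    have := stdNormalCDF_sub_le (s := t - ε) (t := t) (by linarith)
    simpa using this
  -- upper bound
  have hup : (P {ω | V ω ≤ t}).toReal
      ≤ (P {ω | U ω ≤ t + ε}).toReal + (P {ω | ε < |U ω - V ω|}).toReal := by
    have hsub : {ω | V ω ≤ t} ⊆ {ω | U ω ≤ t + ε} ∪ {ω | ε < |U ω - V ω|} := by
      intro ω hω
      by_cases h : ε < |U ω - V ω|
      · exact Or.inr h
      · push_neg at h
        have := (abs_le.1 h).2
        exact Or.inl (by simp only [Set.mem_setOf_eq] at hω ⊢; linarith)
    calc (P {ω | V ω ≤ t}).toReal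
        ≤ (P {ω | U ω ≤ t + ε} + P {ω | ε < |U ω - V ω|}).toReal :=
          ENNReal.toReal_mono (by finiteness)
            ((measure_mono hsub).trans (measure_union_le _ _))
      _ = _ := ENNReal.toReal_add (measure_ne_top _ _) (measure_ne_top _ _)
  -- lower bound
  have hlow : (P {ω | U ω ≤ t - ε}).toReal
      ≤ (P {ω | V ω ≤ t}).toReal + (P {ω | ε < |U ω - V ω|}).toReal := by
    have hsub : {ω | U ω ≤ t - ε} ⊆ {ω | V ω ≤ t} ∪ {ω | ε < |U ω - V ω|} := by
      intro ω hω
      by_cases h : ε < |U ω - V ω|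
      · exact Or.inr h
      · push_neg at h
        have := (abs_le.1 h).1
        exact Or.inl (by simp only [Set.mem_setOf_eq] at hω ⊢; linarith)
    calc (P {ω | U ω ≤ t - ε}).toReal
        ≤ (P {ω | V ω ≤ t} + P {ω | ε < |U ω - V ω|}).toReal :=
          ENNReal.toReal_mono (by finiteness)
            ((measure_mono hsub).trans (measure_union_le _ _))
      _ = _ := ENNReal.toReal_add (measure_ne_top _ _) (measure_ne_top _ _)
  have hKS1 := abs_le.1 (hKS (t + ε))
  have hKS2 := abs_le.1 (hKS (t - ε))
  have hdist : ε * (1 + c) = ε + ε * c := by ring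
  rw [abs_le]
  constructor
  · nlinarith [hKS2.1, hΦ2, hlow, hMarkov]
  · nlinarith [hKS1.2, hΦ1, hup, hMarkov]
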